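/- Assume r ≤ K_λ, where r = rank(A). On the event {2 d_1²(PE) ≤ λ σ̂²}, one has the two-sided bound σ̂² ≤ σ̂_r² ≤ (nm/(nm − λr)) · σ̂². -/

import Mathlib

open scoped BigOperators NNReal ENNReal
open Classical MeasureTheory ProbabilityTheory

noncomputable section

/-- Squared Frobenius (Hilbert–Schmidt) norm of a real matrix. -/
def frob2 {n m : ℕ} (M : Matrix (Fin n) (Fin m) ℝ) : ℝ :=
  ∑ i, ∑ j, (M i j) ^ 2

/-- `sval M k` is the `k`-th largest singular value of `M` (1-based indexing),
i.e. the square root of the `k`-th largest eigenvalue of `Mᴴ * M`; by convention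
it is `0` for `k = 0` and for `k > m`. -/
def sval {n m : ℕ} (M : Matrix (Fin n) (Fin m) ℝ) (k : ℕ) : ℝ :=
  if h : 1 ≤ k ∧ k ≤ m then
    Real.sqrt ((Matrix.isHermitian_conjTranspose_mul_self M).eigenvalues
      (Tuple.sort (Matrix.isHermitian_conjTranspose_mul_self M).eigenvalues ⟨m - k, by omega⟩))
  else 0

/-- A best rank-`k` approximation of `M` in Frobenius norm (rank-`k` truncated SVD),
with the convention that the rank-`0` truncation is `0`. -/
def trunc {n m : ℕ} (M : Matrix (Fin n) (Fin m) ℝ) (k : ℕ) :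
    Matrix (Fin n) (Fin m) ℝ :=
  if k = 0 then 0
  else Classical.epsilon fun B : Matrix (Fin n) (Fin m) ℝ =>
    B.rank ≤ k ∧ ∀ C : Matrix (Fin n) (Fin m) ℝ, C.rank ≤ k → frob2 (M - B) ≤ frob2 (M - C)

/-- `K_λ = ⌊(nm-1)/λ⌋ ∧ q ∧ m`. -/
def Kfun (n m q : ℕ) (lam : ℝ) : ℕ :=
  min (min (Nat.floor ((((n * m : ℕ) : ℝ) - 1) / lam)) q) m

/-- `σ̂_k² = ‖Y - (PY)_k‖² / (nm - λ k)`. -/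
def sighat2 {n m : ℕ} (Y : Matrix (Fin n) (Fin m) ℝ)
    (P : Matrix (Fin n) (Fin n) ℝ) (lam : ℝ) (k : ℕ) : ℝ :=
  frob2 (Y - trunc (P * Y) k) / (((n * m : ℕ) : ℝ) - lam * k)

/-- The selected rank `k̂ = ∑_{k=1}^{K_λ} 1{d_k²(PY) ≥ λ σ̂_k²}`,
which minimizes `σ̂_k²` over `{0, 1, …, K_λ}`. -/
def khat {n m : ℕ} (Y : Matrix (Fin n) (Fin m) ℝ)
    (P : Matrix (Fin n) (Fin n) ℝ) (q : ℕ) (lam : ℝ) : ℕ :=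
  ∑ k ∈ Finset.Icc 1 (Kfun n m q lam),
    if lam * sighat2 Y P lam k ≤ (sval (P * Y) k) ^ 2 then 1 else 0

namespace StatementSixAux

open Matrix

variable {n m : ℕ}

def inner2 {n m : ℕ} (M N : Matrix (Fin n) (Fin m) ℝ) : ℝ := ∑ i, ∑ j, M i j * N i j

lemma frob2_nonneg (M : Matrix (Fin n) (Fin m) ℝ) : 0 ≤ frob2 M :=
  Finset.sum_nonneg fun _ _ => Finset.sum_nonneg fun _ _ => sq_nonneg _

lemma frob2_eq_zero {M : Matrix (Fin n) (Fin m) ℝ} (h : frob2 M = 0) : M = 0 := by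
  ext i j
  have h1 := (Finset.sum_eq_zero_iff_of_nonneg (fun i _ =>
    Finset.sum_nonneg fun j _ => sq_nonneg (M i j))).mp h i (Finset.mem_univ i)
  have h2 := (Finset.sum_eq_zero_iff_of_nonneg (fun j _ => sq_nonneg (M i j))).mp h1 j
    (Finset.mem_univ j)
  simpa using pow_eq_zero_iff (n := 2) (by norm_num) |>.mp h2

lemma frob2_neg (M : Matrix (Fin n) (Fin m) ℝ) : frob2 (-M) = frob2 M := by
  simp [frob2]

lemma frob2_add (A B : Matrix (Fin n) (Fin m) ℝ) :
    frob2 (A + B) = frob2 A + 2 * inner2 A B + frob2 B := by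
  unfold frob2 inner2
  rw [Finset.mul_sum, ← Finset.sum_add_distrib, ← Finset.sum_add_distrib]
  refine Finset.sum_congr rfl fun i _ => ?_
  rw [Finset.mul_sum, ← Finset.sum_add_distrib, ← Finset.sum_add_distrib]
  refine Finset.sum_congr rfl fun j _ => ?_
  simp [Matrix.add_apply]; ring

lemma inner2_comm (A B : Matrix (Fin n) (Fin m) ℝ) : inner2 A B = inner2 B A := by
  unfold inner2
  exact Finset.sum_congr rfl fun i _ => Finset.sum_congr rfl fun j _ => mul_comm _ _

lemma inner2_self (A : Matrix (Fin n) (Fin m) ℝ) : inner2 A A = frob2 A := by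
  unfold inner2 frob2
  exact Finset.sum_congr rfl fun i _ => Finset.sum_congr rfl fun j _ => (pow_two (A i j)).symm

lemma inner2_zero_right (A : Matrix (Fin n) (Fin m) ℝ) : inner2 A 0 = 0 := by simp [inner2]

lemma inner2_sub_right (A B C : Matrix (Fin n) (Fin m) ℝ) :
    inner2 A (B - C) = inner2 A B - inner2 A C := by
  unfold inner2
  rw [← Finset.sum_sub_distrib]
  refine Finset.sum_congr rfl fun i _ => ?_
  rw [← Finset.sum_sub_distrib]
  exact Finset.sum_congr rfl fun j _ => by simp [Matrix.sub_apply]; ring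

lemma inner2_neg_right (A B : Matrix (Fin n) (Fin m) ℝ) : inner2 A (-B) = -inner2 A B := by
  unfold inner2
  rw [← Finset.sum_neg_distrib]
  refine Finset.sum_congr rfl fun i _ => ?_
  rw [← Finset.sum_neg_distrib]
  exact Finset.sum_congr rfl fun j _ => by simp

lemma inner2_eq_trace (A B : Matrix (Fin n) (Fin m) ℝ) : inner2 A B = (Aᵀ * B).trace := by
  unfold inner2
  rw [Matrix.trace]
  simp only [Matrix.diag, Matrix.mul_apply, Matrix.transpose_apply]
  exact Finset.sum_comm

lemma inner2_mul_left {k : ℕ} (M : Matrix (Fin n) (Fin k) ℝ) (Z : Matrix (Fin k) (Fin m) ℝ)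
    (W : Matrix (Fin n) (Fin m) ℝ) : inner2 (M * Z) W = inner2 Z (Mᵀ * W) := by
  rw [inner2_eq_trace, inner2_eq_trace, Matrix.transpose_mul, Matrix.mul_assoc]

lemma inner2_le_sqrt (A B : Matrix (Fin n) (Fin m) ℝ) :
    inner2 A B ≤ Real.sqrt (frob2 A) * Real.sqrt (frob2 B) := by
  have h := Finset.sum_mul_sq_le_sq_mul_sq Finset.univ
    (fun p : Fin n × Fin m => A p.1 p.2) (fun p : Fin n × Fin m => B p.1 p.2)
  have hA : (∑ p : Fin n × Fin m, (A p.1 p.2) ^ 2) = frob2 A := by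
    rw [frob2]; exact Fintype.sum_prod_type _
  have hB : (∑ p : Fin n × Fin m, (B p.1 p.2) ^ 2) = frob2 B := by
    rw [frob2]; exact Fintype.sum_prod_type _
  have hI : (∑ p : Fin n × Fin m, A p.1 p.2 * B p.1 p.2) = inner2 A B := by
    rw [inner2]; exact Fintype.sum_prod_type _
  rw [hA, hB, hI] at h
  calc inner2 A B ≤ |inner2 A B| := le_abs_self _
    _ = Real.sqrt ((inner2 A B) ^ 2) := (Real.sqrt_sq_eq_abs _).symm
    _ ≤ Real.sqrt (frob2 A * frob2 B) := Real.sqrt_le_sqrt h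
    _ = Real.sqrt (frob2 A) * Real.sqrt (frob2 B) := Real.sqrt_mul (frob2_nonneg A) _

/-! ### Spectral bounds -/

lemma sval_nonneg (S : Matrix (Fin n) (Fin m) ℝ) (k : ℕ) : 0 ≤ sval S k := by
  unfold sval
  split
  · exact Real.sqrt_nonneg _
  · exact le_refl 0

lemma dot_self_nonneg (x : Fin m → ℝ) : 0 ≤ x ⬝ᵥ x :=
  Finset.sum_nonneg fun _ _ => mul_self_nonneg _

lemma dot_mulVec_eq (S : Matrix (Fin n) (Fin m) ℝ) (y : Fin m → ℝ) (z : Fin n → ℝ) :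
    y ⬝ᵥ (Sᵀ *ᵥ z) = (S *ᵥ y) ⬝ᵥ z := by
  rw [Matrix.dotProduct_mulVec, Matrix.vecMul_transpose]

lemma quad_bound (S : Matrix (Fin n) (Fin m) ℝ) (y : Fin m → ℝ) :
    (S *ᵥ y) ⬝ᵥ (S *ᵥ y) ≤ (sval S 1) ^ 2 * (y ⬝ᵥ y) := by
  rcases Nat.eq_zero_or_pos m with hm | hm
  · subst hm
    simp [Matrix.mulVec, dotProduct]
  · set hH := Matrix.isHermitian_conjTranspose_mul_self S with hHdef
    set μ := hH.eigenvalues with hμdef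
    set top : Fin m := ⟨m - 1, by omega⟩ with htop
    set μmax : ℝ := μ (Tuple.sort μ top) with hμmax
    have hSt : Sᴴ = Sᵀ := Matrix.conjTranspose_eq_transpose_of_trivial S
    have heignn : ∀ i, 0 ≤ μ i := by
      intro i
      have hv := hH.mulVec_eigenvectorBasis i
      set v : Fin m → ℝ := ⇑(hH.eigenvectorBasis i) with hv2
      have hvdot : v ⬝ᵥ v = 1 := by
        have h1 : ‖hH.eigenvectorBasis i‖ = 1 := hH.eigenvectorBasis.orthonormal.1 i
        have h2 : (inner (𝕜 := ℝ) (hH.eigenvectorBasis i) (hH.eigenvectorBasis i)) = (1:ℝ) := by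
          rw [real_inner_self_eq_norm_sq, h1]; norm_num
        rw [← h2, PiLp.inner_apply]
        simp only [dotProduct, RCLike.inner_apply, starRingEnd_apply, star_trivial]
        rfl
      have h3 : v ⬝ᵥ ((Sᴴ * S) *ᵥ v) = μ i * (v ⬝ᵥ v) := by
        rw [hv]
        simp [dotProduct, Finset.mul_sum]
        exact Finset.sum_congr rfl fun j _ => by rw [hμdef]; ring_nf; rfl
      have h4 : 0 ≤ v ⬝ᵥ ((Sᴴ * S) *ᵥ v) := by
        rw [hSt, ← Matrix.mulVec_mulVec, dot_mulVec_eq]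
        exact dot_self_nonneg _
      rw [h3, hvdot, mul_one] at h4
      exact h4
    have hle : ∀ i, μ i ≤ μmax := by
      intro i
      have hs := Tuple.monotone_sort μ
      have h1 : μ i = (μ ∘ Tuple.sort μ) ((Tuple.sort μ)⁻¹ i) := by simp
      have h2 : ((Tuple.sort μ)⁻¹ i) ≤ top := by
        have hlt := (((Tuple.sort μ)⁻¹ : Equiv.Perm (Fin m)) i).isLt
        rw [htop, Fin.le_def]
        show ((Tuple.sort μ)⁻¹ i : ℕ) ≤ m - 1
        omega
      calc μ i = (μ ∘ Tuple.sort μ) ((Tuple.sort μ)⁻¹ i) := h1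
        _ ≤ (μ ∘ Tuple.sort μ) top := hs h2
        _ = μmax := rfl
    have hd1sq : (sval S 1) ^ 2 = μmax := by
      unfold sval
      rw [dif_pos ⟨le_refl 1, hm⟩, Real.sq_sqrt (heignn _)]
    set U : Matrix (Fin m) (Fin m) ℝ := (hH.eigenvectorUnitary : Matrix (Fin m) (Fin m) ℝ)
      with hU
    have hstarU : star U = Uᵀ := by
      rw [Matrix.star_eq_conjTranspose, Matrix.conjTranspose_eq_transpose_of_trivial]
    have hUU : U * Uᵀ = 1 := by
      rw [← hstarU]
      exact mem_unitaryGroup_iff.mp hH.eigenvectorUnitary.2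
    have hspec : Sᴴ * S = U * Matrix.diagonal μ * Uᵀ := by
      have h : Matrix.diagonal (RCLike.ofReal ∘ μ) = Matrix.diagonal μ := rfl
      rw [← hstarU, ← h]
      exact hH.spectral_theorem
    set z := Uᵀ *ᵥ y with hz
    have hdotU : ∀ w, y ⬝ᵥ (U *ᵥ w) = z ⬝ᵥ w := by
      intro w
      rw [hz, ← dot_mulVec_eq Uᵀ, Matrix.transpose_transpose]
    have h1 : (S *ᵥ y) ⬝ᵥ (S *ᵥ y) = y ⬝ᵥ ((Sᴴ * S) *ᵥ y) := by
      rw [hSt, ← Matrix.mulVec_mulVec, dot_mulVec_eq]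
    have h2 : y ⬝ᵥ ((Sᴴ * S) *ᵥ y) = z ⬝ᵥ (Matrix.diagonal μ *ᵥ z) := by
      rw [hspec, ← Matrix.mulVec_mulVec, ← Matrix.mulVec_mulVec, hdotU]
    have h3 : z ⬝ᵥ z = y ⬝ᵥ y := by
      calc z ⬝ᵥ z = y ⬝ᵥ (U *ᵥ z) := (hdotU z).symm
        _ = y ⬝ᵥ ((U * Uᵀ) *ᵥ y) := by rw [hz, Matrix.mulVec_mulVec]
        _ = y ⬝ᵥ y := by rw [hUU, Matrix.one_mulVec]
    have h4 : z ⬝ᵥ (Matrix.diagonal μ *ᵥ z) ≤ μmax * (z ⬝ᵥ z) := by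
      simp only [dotProduct, Matrix.mulVec_diagonal, Finset.mul_sum]
      refine Finset.sum_le_sum fun i _ => ?_
      nlinarith [mul_self_nonneg (z i), hle i]
    rw [h1, h2, hd1sq, ← h3]
    exact h4

lemma quad_bound_t (S : Matrix (Fin n) (Fin m) ℝ) (x : Fin n → ℝ) :
    (Sᵀ *ᵥ x) ⬝ᵥ (Sᵀ *ᵥ x) ≤ (sval S 1) ^ 2 * (x ⬝ᵥ x) := by
  set t := (Sᵀ *ᵥ x) ⬝ᵥ (Sᵀ *ᵥ x) with ht
  set w := S *ᵥ (Sᵀ *ᵥ x) with hw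
  have h1 : t = x ⬝ᵥ w := by
    have h := dot_mulVec_eq Sᵀ x (Sᵀ *ᵥ x)
    rw [Matrix.transpose_transpose] at h
    rw [ht, hw, ← h]
  have h2 : (x ⬝ᵥ w) ^ 2 ≤ (x ⬝ᵥ x) * (w ⬝ᵥ w) := by
    have h := Finset.sum_mul_sq_le_sq_mul_sq (R := ℝ) Finset.univ x w
    simpa [dotProduct, sq] using h
  have h3 : w ⬝ᵥ w ≤ (sval S 1) ^ 2 * t := quad_bound S (Sᵀ *ᵥ x)
  have htnn : 0 ≤ t := dot_self_nonneg _
  have hxnn : 0 ≤ x ⬝ᵥ x := dot_self_nonneg _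
  rcases eq_or_lt_of_le htnn with h | h
  · rw [← h]
    positivity
  · nlinarith [h2, h3, h1]

/-! ### Factorization with almost-orthonormal columns -/

lemma sum_fin_ext {r s : ℕ} (hs : s ≤ r) (G : ℕ → ℝ) (h0 : ∀ k, s ≤ k → G k = 0) :
    (∑ k : Fin r, G ↑k) = ∑ k : Fin s, G ↑k := by
  rw [Fin.sum_univ_eq_sum_range G r, Fin.sum_univ_eq_sum_range G s]
  symm
  apply Finset.sum_subset (Finset.range_subset_range.mpr hs)
  intro x _ hx
  rw [Finset.mem_range, not_lt] at hx
  exact h0 x hx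

lemma euclid_dot_self (x : EuclideanSpace ℝ (Fin n)) :
    (∑ i, x i * x i) = ‖x‖ ^ 2 := by
  rw [EuclideanSpace.norm_eq, Real.sq_sqrt (Finset.sum_nonneg fun i _ => sq_nonneg _)]
  exact Finset.sum_congr rfl fun i _ => by
    rw [Real.norm_eq_abs, sq_abs, sq]

lemma exists_factor (C : Matrix (Fin n) (Fin m) ℝ) (r : ℕ) (hr : C.rank ≤ r) :
    ∃ (U : Matrix (Fin n) (Fin r) ℝ) (V : Matrix (Fin r) (Fin m) ℝ),
      C = U * V ∧ (∀ k, (∑ i, U i k * U i k) ≤ 1) ∧ frob2 V ≤ frob2 C := by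
  classical
  set col : Fin m → EuclideanSpace ℝ (Fin n) := fun j => WithLp.toLp 2 (fun i => C i j : Fin n → ℝ) with hcol
  set W : Submodule ℝ (EuclideanSpace ℝ (Fin n)) := Submodule.span ℝ (Set.range col) with hWdef
  have hfin : Module.finrank ℝ W = C.rank := by
    rw [Matrix.rank_eq_finrank_span_cols]
    have hW : W = (Submodule.span ℝ (Set.range C.col)).map
        (WithLp.linearEquiv 2 ℝ (Fin n → ℝ)).symm.toLinearMap := by
      rw [Submodule.map_span, ← Set.range_comp]; rfl
    rw [hW, LinearEquiv.finrank_map_eq]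
  set s := Module.finrank ℝ W with hs
  have hsr : s ≤ r := hfin.le.trans hr
  set b := stdOrthonormalBasis ℝ W with hb
  set colW : Fin m → W := fun j => ⟨col j, Submodule.subset_span ⟨j, rfl⟩⟩ with hcolW
  set U : Matrix (Fin n) (Fin r) ℝ :=
    fun i k => if h : (k : ℕ) < s then ((b ⟨k, h⟩ : EuclideanSpace ℝ (Fin n)) i) else 0 with hU
  set V : Matrix (Fin r) (Fin m) ℝ :=
    fun k j => if h : (k : ℕ) < s then b.repr (colW j) ⟨k, h⟩ else 0 with hV
  refine ⟨U, V, ?_, ?_, ?_⟩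
  · ext i j
    rw [Matrix.mul_apply]
    set G : ℕ → ℝ := fun k =>
      if h : k < s then ((b ⟨k, h⟩ : EuclideanSpace ℝ (Fin n)) i) * b.repr (colW j) ⟨k, h⟩
      else 0 with hG
    have h1 : ∀ k : Fin r, U i k * V k j = G ↑k := by
      intro k
      by_cases h : (k : ℕ) < s <;> simp [hU, hV, hG, h]
    have h0 : ∀ k, s ≤ k → G k = 0 := by
      intro k hk
      rw [hG]
      simp [Nat.not_lt.mpr hk]
    rw [Finset.sum_congr rfl (fun k _ => h1 k), sum_fin_ext hsr G h0]
    have hGk : ∀ k : Fin s, G ↑k =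
        ((b k : EuclideanSpace ℝ (Fin n)) i) * b.repr (colW j) k := by
      intro k
      rw [hG]
      simp only [k.isLt, dif_pos, Fin.eta]
    rw [Finset.sum_congr rfl (fun k _ => hGk k)]
    have hx : ((colW j : W) : EuclideanSpace ℝ (Fin n)) =
        ∑ k, b.repr (colW j) k • ((b k : W) : EuclideanSpace ℝ (Fin n)) := by
      conv_lhs => rw [← b.sum_repr (colW j)]
      push_cast
      rfl
    have happ := congrArg (EuclideanSpace.proj (𝕜 := ℝ) i) hx
    simp only [map_sum] at happ
    have hproj : ∀ x : EuclideanSpace ℝ (Fin n), EuclideanSpace.proj (𝕜 := ℝ) i x = x i :=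
      fun _ => rfl
    rw [hproj] at happ
    refine happ.trans (Finset.sum_congr rfl fun k _ => ?_)
    rw [hproj]
    show (b.repr (colW j) k • ((b k : W) : EuclideanSpace ℝ (Fin n))) i = _
    rw [PiLp.smul_apply, smul_eq_mul, mul_comm]
  · intro k
    by_cases h : (k : ℕ) < s
    · have hsum : (∑ i, U i k * U i k) =
          ∑ i, ((b ⟨k, h⟩ : EuclideanSpace ℝ (Fin n)) i) *
            ((b ⟨k, h⟩ : EuclideanSpace ℝ (Fin n)) i) := by
        refine Finset.sum_congr rfl fun i _ => ?_
        simp [hU, h]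
      have h1 : ‖b ⟨(k : ℕ), h⟩‖ = 1 := b.orthonormal.1 _
      have h2 : ‖((b ⟨(k : ℕ), h⟩ : W) : EuclideanSpace ℝ (Fin n))‖ = 1 := by
        rw [Submodule.norm_coe]; exact h1
      rw [hsum, euclid_dot_self, h2]; norm_num
    · have hsum : (∑ i, U i k * U i k) = 0 := by
        refine Finset.sum_eq_zero fun i _ => ?_
        simp [hU, h]
      rw [hsum]; norm_num
  · have h1 : ∀ j, (∑ k : Fin r, V k j ^ 2) = ∑ i, C i j ^ 2 := by
      intro j
      set G : ℕ → ℝ := fun k =>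
        if h : k < s then (b.repr (colW j) ⟨k, h⟩) ^ 2 else 0 with hG
      have h2 : ∀ k : Fin r, V k j ^ 2 = G ↑k := by
        intro k
        by_cases h : (k : ℕ) < s <;> simp [hV, hG, h]
      have h0 : ∀ k, s ≤ k → G k = 0 := by
        intro k hk
        rw [hG]
        simp [Nat.not_lt.mpr hk]
      rw [Finset.sum_congr rfl (fun k _ => h2 k), sum_fin_ext hsr G h0]
      have hGk : ∀ k : Fin s, G ↑k = (b.repr (colW j) k) * (b.repr (colW j) k) := by
        intro k
        rw [hG]
        simp only [k.isLt, dif_pos, Fin.eta, sq]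
      rw [Finset.sum_congr rfl (fun k _ => hGk k), euclid_dot_self, b.repr.norm_map (colW j)]
      have h3 : ‖colW j‖ ^ 2 = ∑ i, C i j * C i j := by
        rw [← Submodule.norm_coe, ← euclid_dot_self ((colW j : W) : EuclideanSpace ℝ (Fin n))]
      rw [h3]
      exact Finset.sum_congr rfl fun i _ => (sq (C i j)).symm
    unfold frob2
    apply le_of_eq
    calc (∑ k : Fin r, ∑ j, V k j ^ 2) = ∑ j, ∑ k : Fin r, V k j ^ 2 := Finset.sum_comm
      _ = ∑ j, ∑ i, C i j ^ 2 := Finset.sum_congr rfl fun j _ => h1 j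
      _ = ∑ i, ∑ j, C i j ^ 2 := Finset.sum_comm

/-! ### Trace–operator-norm inequality -/

lemma inner2_le_op (S D : Matrix (Fin n) (Fin m) ℝ) :
    inner2 S D ≤ sval S 1 * Real.sqrt (D.rank) * Real.sqrt (frob2 D) := by
  obtain ⟨U, V, hUV, hUcol, hVf⟩ := exists_factor D D.rank le_rfl
  have h1 : inner2 S D = inner2 (Uᵀ * S) V := by
    have h2 : inner2 S (U * V) = inner2 (Uᵀ * S) V := by
      rw [inner2_comm, inner2_mul_left, inner2_comm]
    rw [← hUV] at h2
    exact h2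
  have h3 : frob2 (Uᵀ * S) ≤ (sval S 1) ^ 2 * (D.rank : ℝ) := by
    unfold frob2
    have h4 : ∀ k : Fin D.rank, (∑ j, ((Uᵀ * S) k j) ^ 2) =
        (Sᵀ *ᵥ (fun i => U i k)) ⬝ᵥ (Sᵀ *ᵥ (fun i => U i k)) := by
      intro k
      refine Finset.sum_congr rfl fun j _ => ?_
      simp only [Matrix.mul_apply, Matrix.mulVec, dotProduct,
        Matrix.transpose_apply, sq]
      rw [Finset.sum_congr rfl fun i _ => mul_comm (U i k) (S i j)]
    calc (∑ k : Fin D.rank, ∑ j, ((Uᵀ * S) k j) ^ 2)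
        = ∑ k : Fin D.rank, (Sᵀ *ᵥ (fun i => U i k)) ⬝ᵥ (Sᵀ *ᵥ (fun i => U i k)) :=
          Finset.sum_congr rfl fun k _ => h4 k
      _ ≤ ∑ k : Fin D.rank, (sval S 1) ^ 2 * ((fun i => U i k) ⬝ᵥ (fun i => U i k)) :=
          Finset.sum_le_sum fun k _ => quad_bound_t S _
      _ ≤ ∑ _k : Fin D.rank, (sval S 1) ^ 2 * 1 :=
          Finset.sum_le_sum fun k _ =>
            mul_le_mul_of_nonneg_left (hUcol k) (sq_nonneg _)
      _ = (sval S 1) ^ 2 * (D.rank : ℝ) := by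
          rw [Finset.sum_const, Finset.card_univ, Fintype.card_fin]
          simp [mul_comm]
  have h5 : Real.sqrt (frob2 (Uᵀ * S)) ≤ sval S 1 * Real.sqrt (D.rank) := by
    calc Real.sqrt (frob2 (Uᵀ * S)) ≤ Real.sqrt ((sval S 1) ^ 2 * (D.rank : ℝ)) :=
          Real.sqrt_le_sqrt h3
      _ = sval S 1 * Real.sqrt (D.rank) := by
          rw [Real.sqrt_mul (sq_nonneg _), Real.sqrt_sq (sval_nonneg S 1)]
  calc inner2 S D = inner2 (Uᵀ * S) V := h1
    _ ≤ Real.sqrt (frob2 (Uᵀ * S)) * Real.sqrt (frob2 V) := inner2_le_sqrt _ _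
    _ ≤ (sval S 1 * Real.sqrt (D.rank)) * Real.sqrt (frob2 V) :=
        mul_le_mul_of_nonneg_right h5 (Real.sqrt_nonneg _)
    _ ≤ (sval S 1 * Real.sqrt (D.rank)) * Real.sqrt (frob2 D) :=
        mul_le_mul_of_nonneg_left (Real.sqrt_le_sqrt hVf)
          (mul_nonneg (sval_nonneg S 1) (Real.sqrt_nonneg _))

/-! ### Existence of rank-constrained minimizers -/

lemma entry_sq_le_frob2 (M : Matrix (Fin n) (Fin m) ℝ) (i : Fin n) (j : Fin m) :
    (M i j) ^ 2 ≤ frob2 M := by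
  unfold frob2
  calc (M i j) ^ 2 ≤ ∑ j', (M i j') ^ 2 :=
        Finset.single_le_sum (fun j' _ => sq_nonneg (M i j')) (Finset.mem_univ j)
    _ ≤ ∑ i', ∑ j', (M i' j') ^ 2 :=
        Finset.single_le_sum (f := fun i' => ∑ j', (M i' j') ^ 2)
          (fun i' _ => Finset.sum_nonneg fun j' _ => sq_nonneg _) (Finset.mem_univ i)

lemma frob2_le_four (M C : Matrix (Fin n) (Fin m) ℝ) (h : frob2 (M - C) ≤ frob2 M) :
    frob2 C ≤ 4 * frob2 M := by
  have hdec : frob2 C = frob2 M + 2 * inner2 M (-(M - C)) + frob2 (M - C) := by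
    have h1 : C = M + -(M - C) := by abel
    calc frob2 C = frob2 (M + -(M - C)) := by rw [← h1]
      _ = frob2 M + 2 * inner2 M (-(M - C)) + frob2 (M - C) := by rw [frob2_add, frob2_neg]
  have h2 : inner2 M (-(M - C)) ≤ Real.sqrt (frob2 M) * Real.sqrt (frob2 (M - C)) := by
    have := inner2_le_sqrt M (-(M - C))
    rwa [frob2_neg] at this
  have h3 : Real.sqrt (frob2 (M - C)) ≤ Real.sqrt (frob2 M) := Real.sqrt_le_sqrt h
  have h4 : Real.sqrt (frob2 M) ^ 2 = frob2 M := Real.sq_sqrt (frob2_nonneg M)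
  have h5 : Real.sqrt (frob2 (M - C)) ^ 2 = frob2 (M - C) := Real.sq_sqrt (frob2_nonneg _)
  nlinarith [Real.sqrt_nonneg (frob2 M), Real.sqrt_nonneg (frob2 (M - C))]

lemma exists_min (M : Matrix (Fin n) (Fin m) ℝ) (r : ℕ) :
    ∃ B : Matrix (Fin n) (Fin m) ℝ, B.rank ≤ r ∧
      ∀ C : Matrix (Fin n) (Fin m) ℝ, C.rank ≤ r → frob2 (M - B) ≤ frob2 (M - C) := by
  classical
  set c2 : ℝ := Real.sqrt (4 * frob2 M) with hc2
  have hc2nn : 0 ≤ c2 := Real.sqrt_nonneg _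
  set K : Set (Matrix (Fin n) (Fin r) ℝ × Matrix (Fin r) (Fin m) ℝ) :=
    (Set.univ.pi fun _ : Fin n => Set.univ.pi fun _ : Fin r => Set.Icc (-1 : ℝ) 1) ×ˢ
    (Set.univ.pi fun _ : Fin r => Set.univ.pi fun _ : Fin m => Set.Icc (-c2) c2) with hK
  have hKc : IsCompact K := by
    apply IsCompact.prod
    · exact isCompact_univ_pi fun _ => isCompact_univ_pi fun _ => isCompact_Icc
    · exact isCompact_univ_pi fun _ => isCompact_univ_pi fun _ => isCompact_Icc
  have hKne : ((0, 0) : Matrix (Fin n) (Fin r) ℝ × Matrix (Fin r) (Fin m) ℝ) ∈ K := by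
    constructor
    · intro i _
      intro k _
      exact ⟨by norm_num, by norm_num⟩
    · intro k _
      intro j _
      simp only [Matrix.zero_apply]
      exact ⟨by linarith, by linarith⟩
  set f : Matrix (Fin n) (Fin r) ℝ × Matrix (Fin r) (Fin m) ℝ → ℝ :=
    fun x => frob2 (M - x.1 * x.2) with hf
  have hfc : Continuous f := by
    apply continuous_finset_sum
    intro i _
    apply continuous_finset_sum
    intro j _
    have h1 : Continuous fun x : Matrix (Fin n) (Fin r) ℝ × Matrix (Fin r) (Fin m) ℝ =>
        (x.1 * x.2) i j := by
      simp only [Matrix.mul_apply]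
      apply continuous_finset_sum
      intro k _
      exact (continuous_fst.matrix_elem i k).mul (continuous_snd.matrix_elem k j)
    exact ((continuous_const.sub h1).pow 2)
  obtain ⟨x0, hx0K, hx0min⟩ := hKc.exists_isMinOn ⟨(0, 0), hKne⟩ hfc.continuousOn
  refine ⟨x0.1 * x0.2, le_trans (Matrix.rank_mul_le_left _ _) (Matrix.rank_le_width _), ?_⟩
  intro C hC
  have hB0 : f x0 ≤ frob2 M := by
    have h5 := hx0min hKne
    simp only [Set.mem_setOf_eq] at h5
    simpa [hf] using h5
  by_cases hCB : frob2 (M - C) < frob2 (M - x0.1 * x0.2)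
  · exfalso
    have hCM : frob2 (M - C) ≤ frob2 M := le_trans hCB.le hB0
    have hC4 : frob2 C ≤ 4 * frob2 M := frob2_le_four M C hCM
    obtain ⟨U, V, hUV, hUcol, hVf⟩ := exists_factor C r hC
    have hUVK : (U, V) ∈ K := by
      constructor
      · intro i _
        intro k _
        have h1 : (U i k) ^ 2 ≤ 1 := by
          have h2 : U i k * U i k ≤ ∑ i', U i' k * U i' k :=
            Finset.single_le_sum (f := fun i' => U i' k * U i' k)
              (fun i' _ => mul_self_nonneg _) (Finset.mem_univ i)
          have := le_trans h2 (hUcol k)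
          nlinarith
        constructor
        · nlinarith
        · nlinarith
      · intro k _
        intro j _
        have h1 : (V k j) ^ 2 ≤ c2 ^ 2 := by
          have h2 := entry_sq_le_frob2 V k j
          have h3 : frob2 V ≤ 4 * frob2 M := le_trans hVf hC4
          have h4 : c2 ^ 2 = 4 * frob2 M := Real.sq_sqrt (by nlinarith [frob2_nonneg M])
          nlinarith
        constructor
        · nlinarith
        · nlinarith
    have h6 := hx0min hUVK
    have h7 : frob2 (M - x0.1 * x0.2) ≤ frob2 (M - U * V) := h6
    rw [← hUV] at h7
    exact absurd h7 (not_le.mpr hCB)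
  · exact not_lt.mp hCB

/-! ### rank lemmas -/

lemma rank_eq_zero_eq_zero {C : Matrix (Fin n) (Fin m) ℝ} (h : C.rank = 0) : C = 0 := by
  have h1 : LinearMap.range C.mulVecLin = ⊥ := Submodule.finrank_eq_zero.mp h
  have h2 : ∀ v, C *ᵥ v = 0 := by
    intro v
    have : C.mulVecLin v ∈ LinearMap.range C.mulVecLin := LinearMap.mem_range_self _ v
    rw [h1, Submodule.mem_bot] at this
    exact this
  ext i j
  have h3 := congrFun (h2 (Pi.single j 1)) i
  rw [Matrix.mulVec_single_one] at h3
  simpa using h3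

lemma rank_add_le_aux (A B : Matrix (Fin n) (Fin m) ℝ) :
    (A + B).rank ≤ A.rank + B.rank := by
  have h : LinearMap.range (A + B).mulVecLin ≤
      LinearMap.range A.mulVecLin ⊔ LinearMap.range B.mulVecLin := by
    rintro x ⟨v, rfl⟩
    rw [Matrix.mulVecLin_add]
    exact Submodule.mem_sup.mpr ⟨A.mulVecLin v, LinearMap.mem_range_self _ v,
      B.mulVecLin v, LinearMap.mem_range_self _ v, rfl⟩
  calc (A + B).rank
      ≤ Module.finrank ℝ (LinearMap.range A.mulVecLin ⊔ LinearMap.range B.mulVecLin :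
          Submodule ℝ (Fin n → ℝ)) := Submodule.finrank_mono h
    _ ≤ A.rank + B.rank := Submodule.finrank_add_le_finrank_add_finrank _ _

/-! ### spec for trunc -/

lemma trunc_spec (M : Matrix (Fin n) (Fin m) ℝ) (k : ℕ) :
    (trunc M k).rank ≤ k ∧
      ∀ C : Matrix (Fin n) (Fin m) ℝ, C.rank ≤ k → frob2 (M - trunc M k) ≤ frob2 (M - C) := by
  unfold trunc
  by_cases h0 : k = 0
  · rw [if_pos h0]
    constructor
    · rw [Matrix.rank_zero]
      exact Nat.zero_le _
    · intro C hC
      have hC0 : C = 0 := rank_eq_zero_eq_zero (le_antisymm (h0 ▸ hC) (Nat.zero_le _))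
      rw [hC0]
  · rw [if_neg h0]
    exact Classical.epsilon_spec (exists_min M k)

end StatementSixAux

open StatementSixAux Matrix in
set_option maxHeartbeats 2000000 in
theorem statement_6
    {n m p q : ℕ}
    (X : Matrix (Fin n) (Fin p) ℝ) (A : Matrix (Fin p) (Fin m) ℝ)
    (E Y : Matrix (Fin n) (Fin m) ℝ)
    (P : Matrix (Fin n) (Fin n) ℝ)
    (hY : Y = X * A + E)
    (hP2 : P * P = P) (hPt : P.transpose = P) (hPX : P * X = X)
    (hq : X.rank = q) (hPq : P.rank = q)
    (lam : ℝ) (hlam : 0 < lam)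
    (hrK : A.rank ≤ Kfun n m q lam)
    (hev : 2 * (sval (P * E) 1) ^ 2 ≤ lam * (frob2 E / ((n * m : ℕ) : ℝ))) :
    frob2 E / ((n * m : ℕ) : ℝ) ≤ sighat2 Y P lam A.rank ∧
    sighat2 Y P lam A.rank ≤
      ((n * m : ℕ) : ℝ) / (((n * m : ℕ) : ℝ) - lam * A.rank) *
        (frob2 E / ((n * m : ℕ) : ℝ)) := by
  classical
  by_cases hnm : n * m = 0
  · -- degenerate case: everything is 0/0
    have hK0 : Kfun n m q lam = 0 := by
      unfold Kfun
      have h1 : ((((n * m : ℕ) : ℝ) - 1) / lam) ≤ 0 := by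
        apply div_nonpos_of_nonpos_of_nonneg _ hlam.le
        rw [hnm]
        norm_num
      rw [Nat.floor_of_nonpos h1]
      simp
    have hr0 : A.rank = 0 := le_antisymm (hK0 ▸ hrK) (Nat.zero_le _)
    rw [hr0]
    unfold sighat2
    rw [hnm]
    norm_num
  · have hnm1 : 1 ≤ n * m := Nat.one_le_iff_ne_zero.mpr hnm
    set N : ℝ := ((n * m : ℕ) : ℝ) with hN
    have hN1 : (1 : ℝ) ≤ N := by rw [hN]; exact_mod_cast hnm1
    have hNpos : (0 : ℝ) < N := lt_of_lt_of_le one_pos hN1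
    set r := A.rank with hrdef
    have hlr : lam * r ≤ N - 1 := by
      have h1 : r ≤ Nat.floor ((N - 1) / lam) :=
        le_trans hrK (le_trans (min_le_left _ _) (min_le_left _ _))
      have h2 : (r : ℝ) ≤ (N - 1) / lam :=
        le_trans (Nat.cast_le.mpr h1) (Nat.floor_le (div_nonneg (by linarith) hlam.le))
      calc lam * r = (r : ℝ) * lam := mul_comm _ _
        _ ≤ ((N - 1) / lam) * lam := mul_le_mul_of_nonneg_right h2 hlam.le
        _ = N - 1 := div_mul_cancel₀ _ (ne_of_gt hlam)
    have hden : 0 < N - lam * r := by linarith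
    -- the truncation and its properties
    obtain ⟨hBrank, hBmin⟩ := trunc_spec (P * Y) r
    set B := trunc (P * Y) r with hB
    clear_value B
    -- orthogonality facts
    have horth : ∀ Z W : Matrix (Fin n) (Fin m) ℝ, inner2 (P * Z) (W - P * W) = 0 := by
      intro Z W
      have h1 : W - P * W = (1 - P) * W := by rw [Matrix.sub_mul, Matrix.one_mul]
      rw [h1, inner2_mul_left]
      have h2 : Pᵀ * ((1 - P) * W) = 0 := by
        rw [← Matrix.mul_assoc, hPt, Matrix.mul_sub, Matrix.mul_one, hP2, sub_self,
          Matrix.zero_mul]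
      rw [h2, inner2_zero_right]
    have hsplit : ∀ (W C : Matrix (Fin n) (Fin m) ℝ), P * C = C →
        frob2 (W - C) = frob2 (W - P * W) + frob2 (P * W - C) := by
      intro W C hC
      have h1 : W - C = (W - P * W) + (P * W - C) := by abel
      rw [h1, frob2_add]
      have h2 : inner2 (W - P * W) (P * W - C) = 0 := by
        have h3 : P * W - C = P * (W - C) := by rw [Matrix.mul_sub, hC]
        rw [h3, inner2_comm]
        exact horth (W - C) W
      rw [h2]
      ring
    have hPY : P * Y = X * A + P * E := by
      rw [hY, Matrix.mul_add, ← Matrix.mul_assoc, hPX]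
    -- B is in the range of P
    have hPB : P * B = B := by
      have h1 : frob2 (P * Y - B) ≤ frob2 (P * Y - P * B) :=
        hBmin (P * B) (le_trans (Matrix.rank_mul_le_right P B) hBrank)
      have hdec : frob2 (P * Y - B) = frob2 (P * Y - P * B) + frob2 (B - P * B) := by
        have h2 : P * Y - B = (P * Y - P * B) + -(B - P * B) := by abel
        rw [h2, frob2_add, frob2_neg]
        have h3 : inner2 (P * Y - P * B) (-(B - P * B)) = 0 := by
          rw [inner2_neg_right]
          have h4 : P * Y - P * B = P * (Y - B) := by rw [Matrix.mul_sub]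
          rw [h4, horth (Y - B) B]
          ring
        rw [h3]
        ring
      have h5 : frob2 (B - P * B) = 0 := by
        have := frob2_nonneg (B - P * B)
        linarith
      have h6 := frob2_eq_zero h5
      have h7 : B - P * B = 0 := h6
      have := sub_eq_zero.mp h7
      exact this.symm
    -- decompositions
    have hYP : Y - P * Y = E - P * E := by rw [hPY, hY]; abel
    have hTdec : frob2 (Y - B) = frob2 (E - P * E) + frob2 (P * Y - B) := by
      have := hsplit Y B hPB
      rw [hYP] at this
      exact this
    have hEdec : frob2 E = frob2 (E - P * E) + frob2 (P * E) := by
      have h1 : E = (E - P * E) + P * E := by abel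
      calc frob2 E = frob2 ((E - P * E) + P * E) := by rw [← h1]
        _ = frob2 (E - P * E) + 2 * inner2 (E - P * E) (P * E) + frob2 (P * E) := frob2_add _ _
        _ = frob2 (E - P * E) + frob2 (P * E) := by
            rw [inner2_comm, horth E E]
            ring
    -- upper bound
    have hXA : (X * A).rank ≤ r := Matrix.rank_mul_le_right X A
    have hPYXA : P * Y - X * A = P * E := by rw [hPY]; abel
    have hub : frob2 (P * Y - B) ≤ frob2 (P * E) := by
      rw [← hPYXA]
      exact hBmin (X * A) hXA
    have hTle : frob2 (Y - B) ≤ frob2 E := by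
      rw [hTdec, hEdec]
      linarith
    -- lower bound
    set D := B - X * A with hD
    clear_value D
    have hrD : ((D.rank : ℕ) : ℝ) ≤ 2 * r := by
      have h1 : D.rank ≤ B.rank + A.rank := by
        have h2 : D = B + (-X) * A := by rw [hD, Matrix.neg_mul]; abel
        rw [h2]
        exact le_trans (rank_add_le_aux B ((-X) * A))
          (Nat.add_le_add_left (Matrix.rank_mul_le_right (-X) A) _)
      have h4 : D.rank ≤ r + r := le_trans h1 (Nat.add_le_add hBrank le_rfl)
      push_cast
      have := (Nat.cast_le (α := ℝ)).mpr h4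
      push_cast at this
      linarith
    have hPED : P * E = (P * Y - B) + D := by rw [hPY, hD]; abel
    have hd1 := sval_nonneg (P * E) 1
    have hkey : frob2 (P * E) - frob2 (P * Y - B) ≤ 2 * r * (sval (P * E) 1) ^ 2 := by
      have h1 : frob2 (P * E) =
          frob2 (P * Y - B) + 2 * inner2 (P * Y - B) D + frob2 D := by
        rw [hPED, frob2_add]
      have h2 : P * Y - B = P * E - D := by rw [hPED]; abel
      have h3 : inner2 (P * Y - B) D = inner2 D (P * E) - frob2 D := by
        rw [h2, inner2_comm, inner2_sub_right, inner2_self, inner2_comm]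
      have hop : inner2 (P * E) D ≤
          sval (P * E) 1 * Real.sqrt (2 * r) * Real.sqrt (frob2 D) := by
        refine le_trans (inner2_le_op (P * E) D) ?_
        apply mul_le_mul_of_nonneg_right _ (Real.sqrt_nonneg _)
        apply mul_le_mul_of_nonneg_left _ hd1
        exact Real.sqrt_le_sqrt hrD
      have h6 : Real.sqrt (frob2 D) ^ 2 = frob2 D := Real.sq_sqrt (frob2_nonneg D)
      have h7 : Real.sqrt (2 * (r : ℝ)) ^ 2 = 2 * (r : ℝ) := by
        rw [Real.sq_sqrt]
        positivity
      have h8 := inner2_comm D (P * E)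
      set a := sval (P * E) 1 * Real.sqrt (2 * (r : ℝ)) with ha
      clear_value a
      set bb := Real.sqrt (frob2 D) with hbb
      clear_value bb
      have e1 : frob2 (P * E) - frob2 (P * Y - B) = 2 * inner2 (P * E) D - frob2 D := by
        linarith [h1, h3, h8]
      have e2 : 2 * inner2 (P * E) D - frob2 D ≤ 2 * (a * bb) - bb ^ 2 := by
        linarith [hop, h6]
      have e3 : 2 * (a * bb) - bb ^ 2 ≤ a ^ 2 := by nlinarith [sq_nonneg (a - bb)]
      have e4 : a ^ 2 = 2 * (r : ℝ) * (sval (P * E) 1) ^ 2 := by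
        rw [ha, mul_pow, h7]
        ring
      linarith
    have hev2 : 2 * r * (sval (P * E) 1) ^ 2 ≤ lam * r * (frob2 E / N) := by
      have hrnn : (0 : ℝ) ≤ r := Nat.cast_nonneg r
      nlinarith [hev]
    have hlow : frob2 E - frob2 (Y - B) ≤ lam * r * (frob2 E / N) := by
      have h9 : frob2 E - frob2 (Y - B) = frob2 (P * E) - frob2 (P * Y - B) := by
        rw [hTdec, hEdec]; ring
      rw [h9]
      exact le_trans hkey hev2
    -- conclusion
    have hsig : sighat2 Y P lam r = frob2 (Y - B) / (N - lam * r) := by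
      unfold sighat2
      rw [← hB, ← hN]
    have hEnn := frob2_nonneg E
    constructor
    · rw [hsig, div_le_div_iff₀ hNpos hden]
      have h1 : (frob2 E - frob2 (Y - B)) * N ≤ lam * r * frob2 E := by
        have h2 := mul_le_mul_of_nonneg_right hlow hNpos.le
        calc (frob2 E - frob2 (Y - B)) * N ≤ (lam * r * (frob2 E / N)) * N := h2
          _ = lam * r * frob2 E := by field_simp
      nlinarith
    · rw [hsig]
      have hrhs : N / (N - lam * r) * (frob2 E / N) = frob2 E / (N - lam * r) := by
        field_simp
      rw [hrhs]
      exact (div_le_div_iff_of_pos_right hden).mpr hTle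

end
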